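/- In the VPG construction setup: let u and v be distinct internal vertices such that u is not an ancestor of v and v is not an ancestor of u. Then [l_x(u), r_x(u)] ∩ [l_x(v), r_x(v)] = ∅. -/

import Mathlib

open SimpleGraph Set Function

/-- `u` is an ancestor of `v` with respect to root `r`:
`u` lies on the unique path in `T` from `r` to `v`. -/
def IsAncestor {V : Type*} (T : SimpleGraph V) (r u v : V) : Prop :=
  ∀ p : T.Walk r v, p.IsPath → u ∈ p.support

/-- `u` is the parent of `v` with respect to root `r`. -/
def IsParent {V : Type*} (T : SimpleGraph V) (r u v : V) : Prop :=
  IsAncestor T r u v ∧ u ≠ v ∧ T.Adj u v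

/-- `L^r(u)`: the set of leaves of `T` that are descendants of `u`. -/
def LeafSet {V : Type*} (T : SimpleGraph V) [Fintype V] [DecidableRel T.Adj] (r u : V) :
    Set V :=
  {c | T.degree c = 1 ∧ IsAncestor T r u c}

/-- The leaf `c_{j mod k}` index. -/
def cidx {k : ℕ} (hk : 0 < k) (j : ℕ) : Fin k := ⟨j % k, Nat.mod_lt _ hk⟩

/-- A set `A` of leaves is cyclically consecutive with respect to the enumeration `c`. -/
def CycConsec {V : Type*} {k : ℕ} (hk : 0 < k) (c : Fin k → V) (A : Set V) : Prop :=
  ∃ j m : ℕ, A = {x | ∃ t ≤ m, x = c (cidx hk (j + t))}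

lemma anc_of_mem {V : Type*} {T : SimpleGraph V} (hT : T.IsTree) {r u v : V}
    (q : T.Walk r v) (hq : q.IsPath) (hu : u ∈ q.support) : IsAncestor T r u v := by
  intro p hp
  have := (hT.existsUnique_path r v).unique hp hq
  rw [this]; exact hu

lemma comparable {V : Type*} {T : SimpleGraph V} (hT : T.IsTree) {r c u v : V}
    (p : T.Walk r c) (hp : p.IsPath) (hu : u ∈ p.support) (hv : v ∈ p.support) :
    IsAncestor T r u v ∨ IsAncestor T r v u := by
  classical
  by_cases hcase : u ∈ (p.takeUntil v hv).support
  · exact Or.inl (anc_of_mem hT _ (hp.takeUntil hv) hcase)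
  · set q := p.takeUntil v hv with hqdef
    set d := p.dropUntil v hv with hddef
    have hu' : u ∈ d.support := by
      have h2 : u ∈ (q.append d).support := by rw [hqdef, hddef, p.take_spec hv]; exact hu
      rw [Walk.mem_support_append_iff] at h2
      tauto
    have hq : q.IsPath := hp.takeUntil hv
    have hd : d.IsPath := hp.dropUntil hv
    set rr := d.takeUntil u hu' with hrrdef
    have hr : rr.IsPath := hd.takeUntil hu'
    have hps : q.support ++ d.support.tail = p.support := by
      have := congrArg Walk.support (p.take_spec hv)
      rwa [Walk.support_append] at this
    have hpnodup : (q.support ++ d.support.tail).Nodup := by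
      rw [hps]; exact hp.support_nodup
    rw [List.nodup_append] at hpnodup
    have hw : (q.append rr).IsPath := by
      apply Walk.IsPath.mk'
      rw [Walk.support_append, List.nodup_append]
      refine ⟨hq.support_nodup, ?_, ?_⟩
      · have := hr.support_nodup
        rw [rr.support_eq_cons] at this
        exact this.of_cons
      · intro x hx x' hx' hxx'
        subst hxx'
        have hxd : x ∈ d.support := Walk.support_takeUntil_subset d hu' (List.mem_of_mem_tail hx')
        rw [d.support_eq_cons] at hxd
        rcases List.mem_cons.mp hxd with rfl | hxt
        · have := hr.support_nodup
          rw [rr.support_eq_cons] at this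
          exact (List.nodup_cons.mp this).1 hx'
        · exact hpnodup.2.2 x hx x hxt rfl
    have hvmem : v ∈ (q.append rr).support := by
      rw [Walk.mem_support_append_iff]; left; exact q.end_mem_support
    exact Or.inr (anc_of_mem hT _ hw hvmem)
/-- incomparable internal vertices have disjoint horizontal extents. -/
theorem stmt9
    {V : Type*} [Fintype V] (T : SimpleGraph V) [DecidableRel T.Adj]
    (hT : T.IsTree) {k : ℕ} (hk : 3 ≤ k) (b : Fin k → V)
    (hinj : Function.Injective b)
    (hleaf : ∀ v : V, T.degree v = 1 ↔ ∃ i : Fin k, v = b i)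
    (r' : V) (hr' : 2 ≤ T.degree r')
    (hconsec : ∀ u : V, 2 ≤ T.degree u → ∃ s t : Fin k, s ≤ t ∧
        LeafSet T r' u = {x | ∃ j : Fin k, s ≤ j ∧ j ≤ t ∧ x = b j})
    (hpath0 : ∀ p : T.Walk (b ⟨0, by omega⟩) r', p.IsPath →
        ∀ w ∈ p.support, w ≠ b ⟨0, by omega⟩ → w ≠ r' → ∃ z : V, LeafSet T r' w = {z})
    (hpath1 : ∀ p : T.Walk (b ⟨1, by omega⟩) r', p.IsPath →
        ∀ w ∈ p.support, w ≠ b ⟨1, by omega⟩ → w ≠ r' → ∃ z : V, LeafSet T r' w = {z})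
    (h : ℕ) (hmax : IsGreatest (Set.range fun u : V => T.dist r' u) h)
    (lx rx ly ry : V → ℝ)
    (hb0 : lx (b ⟨0, by omega⟩) = 1.5 ∧ rx (b ⟨0, by omega⟩) = (k : ℝ) - 1 ∧
      ly (b ⟨0, by omega⟩) = 0 ∧
      ry (b ⟨0, by omega⟩) = (h : ℝ) - (T.dist r' (b ⟨0, by omega⟩) : ℝ) + 2)
    (hb1 : lx (b ⟨1, by omega⟩) = 1 ∧ rx (b ⟨1, by omega⟩) = 2 ∧
      ly (b ⟨1, by omega⟩) = 1 ∧
      ry (b ⟨1, by omega⟩) = (h : ℝ) - (T.dist r' (b ⟨1, by omega⟩) : ℝ) + 2)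
    (hbk : lx (b ⟨k - 1, by omega⟩) = (k : ℝ) - 1 ∧ rx (b ⟨k - 1, by omega⟩) = (k : ℝ) ∧
      ly (b ⟨k - 1, by omega⟩) = 0 ∧
      ry (b ⟨k - 1, by omega⟩) = (h : ℝ) - (T.dist r' (b ⟨k - 1, by omega⟩) : ℝ) + 2)
    (hbi : ∀ i : Fin k, 2 ≤ (i : ℕ) → (i : ℕ) ≤ k - 2 →
      lx (b i) = ((i : ℕ) : ℝ) ∧ rx (b i) = ((i : ℕ) : ℝ) + 1 ∧ ly (b i) = 1 ∧
      ry (b i) = (h : ℝ) - (T.dist r' (b i) : ℝ) + 2)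
    (hintv : ∀ v : V, 2 ≤ T.degree v →
      lx v = sInf (lx '' LeafSet T r' v) ∧ rx v = sSup (lx '' LeafSet T r' v) ∧
      ly v = (h : ℝ) - (T.dist r' v : ℝ) + 1 ∧ ry v = (h : ℝ) - (T.dist r' v : ℝ) + 2)
    :
    ∀ u v : V, u ≠ v → 2 ≤ T.degree u → 2 ≤ T.degree v →
      ¬ IsAncestor T r' u v → ¬ IsAncestor T r' v u →
      Set.Icc (lx u) (rx u) ∩ Set.Icc (lx v) (rx v) = ∅ := by
  classical
  intro u v huv hu hv hanuv hanvu
  have hanc_r : ∀ w : V, IsAncestor T r' r' w := fun w p _ => p.start_mem_support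
  have hur : u ≠ r' := fun hh => hanuv (hh ▸ hanc_r v)
  have hvr : v ≠ r' := fun hh => hanvu (hh ▸ hanc_r u)
  have hdeg_b : ∀ j : Fin k, T.degree (b j) = 1 := fun j => (hleaf (b j)).mpr ⟨j, rfl⟩
  -- singleton leaf sets for ancestors of b0, b1
  have key0 : ∀ ℓ : V, T.degree ℓ = 1 →
      (∀ p : T.Walk ℓ r', p.IsPath → ∀ w ∈ p.support, w ≠ ℓ → w ≠ r' →
        ∃ z : V, LeafSet T r' w = {z}) →
      ∀ w : V, 2 ≤ T.degree w → w ≠ r' → IsAncestor T r' w ℓ →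
        ∃ z : V, LeafSet T r' w = {z} := by
    intro ℓ hℓ hpath w hw hwr hanc
    obtain ⟨wk⟩ := hT.isConnected.preconnected ℓ r'
    have hp2 := wk.toPath.2
    have hwmem : w ∈ wk.toPath.1.support := by
      have := hanc wk.toPath.1.reverse hp2.reverse
      rwa [Walk.support_reverse, List.mem_reverse] at this
    exact hpath wk.toPath.1 hp2 w hwmem
      (fun hh => by rw [hh, hℓ] at hw; omega) hwr
  have key : ∀ w : V, 2 ≤ T.degree w → w ≠ r' → ∀ i0 : Fin k, (i0 : ℕ) ≤ 1 →
      IsAncestor T r' w (b i0) → ∃ z : V, LeafSet T r' w = {z} := by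
    intro w hw hwr i0 hi0 hanc
    rcases Nat.le_one_iff_eq_zero_or_eq_one.mp hi0 with h0 | h1
    · have hi : i0 = ⟨0, by omega⟩ := Fin.ext h0
      exact key0 (b ⟨0, by omega⟩) (hdeg_b _) hpath0 w hw hwr (hi ▸ hanc)
    · have hi : i0 = ⟨1, by omega⟩ := Fin.ext h1
      exact key0 (b ⟨1, by omega⟩) (hdeg_b _) hpath1 w hw hwr (hi ▸ hanc)
  have hsmall : ∀ w : V, 2 ≤ T.degree w → w ≠ r' → ∀ s t : Fin k, s ≤ t →
      LeafSet T r' w = {x | ∃ j : Fin k, s ≤ j ∧ j ≤ t ∧ x = b j} →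
      (s : ℕ) ≤ 1 → s = t := by
    intro w hw hwr s t hst hset hs1
    by_contra hne
    have hmem_s : b s ∈ LeafSet T r' w := by rw [hset]; exact ⟨s, le_refl s, hst, rfl⟩
    have hanc : IsAncestor T r' w (b s) := hmem_s.2
    obtain ⟨z, hz⟩ := key w hw hwr s hs1 hanc
    have hmem_t : b t ∈ LeafSet T r' w := by rw [hset]; exact ⟨t, hst, le_refl t, rfl⟩
    rw [hz, Set.mem_singleton_iff] at hmem_s hmem_t
    exact hne (hinj (hmem_s.trans hmem_t.symm))
  -- value of lx at leaves with index ≥ 2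
  have hval : ∀ j : Fin k, 2 ≤ (j : ℕ) → lx (b j) = ((j : ℕ) : ℝ) := by
    intro j hj
    by_cases hjk : (j : ℕ) = k - 1
    · have hje : j = ⟨k - 1, by omega⟩ := Fin.ext hjk
      rw [hje, hbk.1]
      have : ((⟨k - 1, by omega⟩ : Fin k) : ℕ) = k - 1 := rfl
      rw [this, Nat.cast_sub (by omega : 1 ≤ k), Nat.cast_one]
    · have hjlt := j.isLt
      exact (hbi j hj (by omega)).1
  -- image characterization
  have himg : ∀ (w : V) (s t : Fin k),
      LeafSet T r' w = {x | ∃ j : Fin k, s ≤ j ∧ j ≤ t ∧ x = b j} →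
      lx '' LeafSet T r' w = {y | ∃ j : Fin k, s ≤ j ∧ j ≤ t ∧ y = lx (b j)} := by
    intro w s t hset
    rw [hset]; ext y
    constructor
    · rintro ⟨x, ⟨j, h1, h2, rfl⟩, rfl⟩; exact ⟨j, h1, h2, rfl⟩
    · rintro ⟨j, h1, h2, rfl⟩; exact ⟨b j, ⟨j, h1, h2, rfl⟩, rfl⟩
  -- bounds on rx and lx of internal vertices
  have hub : ∀ (w : V), 2 ≤ T.degree w → ∀ s t : Fin k, s ≤ t →
      lx '' LeafSet T r' w = {y | ∃ j : Fin k, s ≤ j ∧ j ≤ t ∧ y = lx (b j)} →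
      ∀ M : ℝ, (∀ j : Fin k, s ≤ j → j ≤ t → lx (b j) ≤ M) → rx w ≤ M := by
    intro w hw s t hst him M hM
    rw [(hintv w hw).2.1]
    apply csSup_le ⟨lx (b s), by rw [him]; exact ⟨s, le_refl s, hst, rfl⟩⟩
    rw [him]; rintro y ⟨j, h1, h2, rfl⟩; exact hM j h1 h2
  have hlb : ∀ (w : V), 2 ≤ T.degree w → ∀ s t : Fin k, s ≤ t →
      lx '' LeafSet T r' w = {y | ∃ j : Fin k, s ≤ j ∧ j ≤ t ∧ y = lx (b j)} →
      ∀ m : ℝ, (∀ j : Fin k, s ≤ j → j ≤ t → m ≤ lx (b j)) → m ≤ lx w := by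
    intro w hw s t hst him m hm
    rw [(hintv w hw).1]
    apply le_csInf ⟨lx (b s), by rw [him]; exact ⟨s, le_refl s, hst, rfl⟩⟩
    rw [him]; rintro y ⟨j, h1, h2, rfl⟩; exact hm j h1 h2
  have hIcc : ∀ a1 a2 a3 a4 : ℝ, a2 < a3 → Set.Icc a1 a2 ∩ Set.Icc a3 a4 = ∅ := by
    intro a1 a2 a3 a4 hlt
    apply Set.eq_empty_iff_forall_notMem.mpr
    rintro x ⟨⟨_, hx2⟩, hx3, _⟩
    linarith
  -- one-sided main argument
  have onesided : ∀ u v : V, 2 ≤ T.degree u → 2 ≤ T.degree v → u ≠ r' → v ≠ r' →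
      ∀ s t s' t' : Fin k, s ≤ t → s' ≤ t' →
      LeafSet T r' u = {x | ∃ j : Fin k, s ≤ j ∧ j ≤ t ∧ x = b j} →
      LeafSet T r' v = {x | ∃ j : Fin k, s' ≤ j ∧ j ≤ t' ∧ x = b j} →
      (t : ℕ) < (s' : ℕ) →
      Set.Icc (lx u) (rx u) ∩ Set.Icc (lx v) (rx v) = ∅ := by
    intro u v hu hv hur hvr s t s' t' hst hst' hsetu hsetv hlt
    have hiu := himg u s t hsetu
    have hiv := himg v s' t' hsetv
    rcases lt_or_ge (s : ℕ) 2 with hs2 | hs2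
    · obtain rfl : s = t := hsmall u hu hur s t hst hsetu (by omega)
      rcases (by omega : (s : ℕ) = 0 ∨ (s : ℕ) = 1) with h0 | h1
      · -- s = t = 0
        have hs0 : s = ⟨0, by omega⟩ := Fin.ext h0
        rcases lt_or_ge (s' : ℕ) 2 with hs'2 | hs'2
        · -- s' = t' = 1 : v's interval is left of u's
          obtain rfl : s' = t' := hsmall v hv hvr s' t' hst' hsetv (by omega)
          have hs'1 : s' = ⟨1, by omega⟩ := Fin.ext (show (s' : ℕ) = 1 by omega)
          have hrv : rx v ≤ 1 := by
            apply hub v hv s' s' (le_refl _) hiv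
            intro j hj1 hj2
            rw [le_antisymm hj2 hj1, hs'1, hb1.1]
          have hlu : (1.5 : ℝ) ≤ lx u := by
            apply hlb u hu s s (le_refl _) hiu
            intro j hj1 hj2
            rw [le_antisymm hj2 hj1, hs0, hb0.1]
          rw [Set.inter_comm]
          exact hIcc _ _ _ _ (by linarith)
        · -- s' ≥ 2 : u's interval is left of v's
          have hru : rx u ≤ 1.5 := by
            apply hub u hu s s (le_refl _) hiu
            intro j hj1 hj2
            rw [le_antisymm hj2 hj1, hs0, hb0.1]
          have hlv : (2 : ℝ) ≤ lx v := by
            apply hlb v hv s' t' hst' hiv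
            intro j hj1 _
            have hj2 : 2 ≤ (j : ℕ) := le_trans hs'2 (Fin.le_def.mp hj1)
            rw [hval j hj2]
            exact_mod_cast hj2
          exact hIcc _ _ _ _ (by linarith)
      · -- s = t = 1, hence s' ≥ 2
        have hs1 : s = ⟨1, by omega⟩ := Fin.ext h1
        have hs'2 : 2 ≤ (s' : ℕ) := by omega
        have hru : rx u ≤ 1 := by
          apply hub u hu s s (le_refl _) hiu
          intro j hj1 hj2
          rw [le_antisymm hj2 hj1, hs1, hb1.1]
        have hlv : (2 : ℝ) ≤ lx v := by
          apply hlb v hv s' t' hst' hiv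
          intro j hj1 _
          have hj2 : 2 ≤ (j : ℕ) := le_trans hs'2 (Fin.le_def.mp hj1)
          rw [hval j hj2]
          exact_mod_cast hj2
        exact hIcc _ _ _ _ (by linarith)
    · -- s ≥ 2
      have hru : rx u ≤ ((t : ℕ) : ℝ) := by
        apply hub u hu s t hst hiu
        intro j hj1 hj2
        have hj : 2 ≤ (j : ℕ) := le_trans hs2 (Fin.le_def.mp hj1)
        rw [hval j hj]
        exact_mod_cast Fin.le_def.mp hj2
      have hlv : ((s' : ℕ) : ℝ) ≤ lx v := by
        apply hlb v hv s' t' hst' hiv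
        intro j hj1 _
        have hj1' := Fin.le_def.mp hj1
        have hj : 2 ≤ (j : ℕ) := by omega
        rw [hval j hj]
        exact_mod_cast hj1'
      have : ((t : ℕ) : ℝ) < ((s' : ℕ) : ℝ) := by exact_mod_cast hlt
      exact hIcc _ _ _ _ (by linarith)
  -- leaf sets are disjoint for incomparable vertices
  obtain ⟨s, t, hst, hsetu⟩ := hconsec u hu
  obtain ⟨s', t', hst', hsetv⟩ := hconsec v hv
  have hdisj : ∀ j : Fin k, ¬(s ≤ j ∧ j ≤ t ∧ s' ≤ j ∧ j ≤ t') := by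
    rintro j ⟨h1, h2, h3, h4⟩
    have hju : b j ∈ LeafSet T r' u := by rw [hsetu]; exact ⟨j, h1, h2, rfl⟩
    have hjv : b j ∈ LeafSet T r' v := by rw [hsetv]; exact ⟨j, h3, h4, rfl⟩
    obtain ⟨wk⟩ := hT.isConnected.preconnected r' (b j)
    have hp2 := wk.toPath.2
    have hup : u ∈ wk.toPath.1.support := hju.2 wk.toPath.1 hp2
    have hvp : v ∈ wk.toPath.1.support := hjv.2 wk.toPath.1 hp2
    rcases comparable hT wk.toPath.1 hp2 hup hvp with hc | hc
    · exact hanuv hc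
    · exact hanvu hc
  have horder : (t : ℕ) < (s' : ℕ) ∨ (t' : ℕ) < (s : ℕ) := by
    by_contra hcon
    push_neg at hcon
    apply hdisj (s ⊔ s')
    refine ⟨le_sup_left, ?_, le_sup_right, ?_⟩
    · apply sup_le hst
      exact Fin.le_def.mpr hcon.1
    · apply sup_le _ hst'
      exact Fin.le_def.mpr hcon.2
  rcases horder with ho | ho
  · exact onesided u v hu hv hur hvr s t s' t' hst hst' hsetu hsetv ho
  · rw [Set.inter_comm]
    exact onesided v u hv hu hvr hur s' t' s t hst' hst hsetv hsetu ho
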